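/- The map f̄ : ℝ² → ℝ⁵ given by f̄(u,v) = ((1/2)(3cosh²(u)cosh²(v) - 1), √3 sinh(u)cosh(u)cosh²(v), √3 cosh(u)sinh(v)cosh(v), (3/2)(cosh²(v)(cosh²(u) - 2) + 1), 3 sinh(u)sinh(v)cosh(v)) is an immersion: its partial derivatives f̄_u and f̄_v are linearly independent at every point (u,v) ∈ ℝ². -/

import Mathlib

noncomputable def fbarSL (u v : ℝ) : Fin 5 → ℝ :=
  ![(1/2) * (3 * Real.cosh u ^ 2 * Real.cosh v ^ 2 - 1),
    Real.sqrt 3 * Real.sinh u * Real.cosh u * Real.cosh v ^ 2,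
    Real.sqrt 3 * Real.cosh u * Real.sinh v * Real.cosh v,
    (3/2) * (Real.cosh v ^ 2 * (Real.cosh u ^ 2 - 2) + 1),
    3 * Real.sinh u * Real.sinh v * Real.cosh v]

open Real

lemma d_u1 (u v : ℝ) : deriv (fun s => fbarSL s v 1) u
    = Real.sqrt 3 * (Real.cosh u ^ 2 + Real.sinh u ^ 2) * Real.cosh v ^ 2 := by
  have h : HasDerivAt (fun s => fbarSL s v 1)
      (Real.sqrt 3 * (Real.cosh u ^ 2 + Real.sinh u ^ 2) * Real.cosh v ^ 2) u := by
    have h1 := (((Real.hasDerivAt_sinh u).mul (Real.hasDerivAt_cosh u)).const_mul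
      (Real.sqrt 3)).mul_const (Real.cosh v ^ 2)
    have he : (fun s => fbarSL s v 1)
        = fun s => Real.sqrt 3 * (Real.sinh s * Real.cosh s) * Real.cosh v ^ 2 := by
      funext s; simp only [fbarSL, Matrix.cons_val_one, Matrix.head_cons,
        Matrix.cons_val_two, Matrix.tail_cons, Matrix.cons_val_zero]; ring
    rw [he]
    refine h1.congr_deriv ?_; ring
  exact h.deriv

lemma d_u2 (u v : ℝ) : deriv (fun s => fbarSL s v 2) u
    = Real.sqrt 3 * Real.sinh u * Real.sinh v * Real.cosh v := by
  have h : HasDerivAt (fun s => fbarSL s v 2)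
      (Real.sqrt 3 * Real.sinh u * Real.sinh v * Real.cosh v) u := by
    have h1 := ((Real.hasDerivAt_cosh u).const_mul (Real.sqrt 3)).mul_const
      (Real.sinh v * Real.cosh v)
    have he : (fun s => fbarSL s v 2)
        = fun s => Real.sqrt 3 * Real.cosh s * (Real.sinh v * Real.cosh v) := by
      funext s; simp only [fbarSL, Matrix.cons_val_one, Matrix.head_cons,
        Matrix.cons_val_two, Matrix.tail_cons, Matrix.cons_val_zero]; ring
    rw [he]
    refine h1.congr_deriv ?_; ring
  exact h.deriv

lemma d_v1 (u v : ℝ) : deriv (fun s => fbarSL u s 1) v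
    = Real.sqrt 3 * Real.sinh u * Real.cosh u * (2 * Real.sinh v * Real.cosh v) := by
  have h : HasDerivAt (fun s => fbarSL u s 1)
      (Real.sqrt 3 * Real.sinh u * Real.cosh u * (2 * Real.sinh v * Real.cosh v)) v := by
    have h1 := ((Real.hasDerivAt_cosh v).mul (Real.hasDerivAt_cosh v)).const_mul
      (Real.sqrt 3 * Real.sinh u * Real.cosh u)
    have he : (fun s => fbarSL u s 1)
        = fun s => Real.sqrt 3 * Real.sinh u * Real.cosh u * (Real.cosh s * Real.cosh s) := by
      funext s; simp only [fbarSL, Matrix.cons_val_one, Matrix.head_cons,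
        Matrix.cons_val_two, Matrix.tail_cons, Matrix.cons_val_zero]; ring
    rw [he]
    refine h1.congr_deriv ?_; ring
  exact h.deriv

lemma d_v2 (u v : ℝ) : deriv (fun s => fbarSL u s 2) v
    = Real.sqrt 3 * Real.cosh u * (Real.cosh v ^ 2 + Real.sinh v ^ 2) := by
  have h : HasDerivAt (fun s => fbarSL u s 2)
      (Real.sqrt 3 * Real.cosh u * (Real.cosh v ^ 2 + Real.sinh v ^ 2)) v := by
    have h1 := ((Real.hasDerivAt_sinh v).mul (Real.hasDerivAt_cosh v)).const_mul
      (Real.sqrt 3 * Real.cosh u)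
    have he : (fun s => fbarSL u s 2)
        = fun s => Real.sqrt 3 * Real.cosh u * (Real.sinh s * Real.cosh s) := by
      funext s; simp only [fbarSL, Matrix.cons_val_one, Matrix.head_cons,
        Matrix.cons_val_two, Matrix.tail_cons, Matrix.cons_val_zero]; ring
    rw [he]
    refine h1.congr_deriv ?_; ring
  exact h.deriv

theorem spacelike_plus_param_immersion (u v : ℝ) :
    LinearIndependent ℝ
      ![(fun i => deriv (fun s => fbarSL s v i) u),
        (fun i => deriv (fun s => fbarSL u s i) v)] := by
  have hr : (0:ℝ) < Real.sqrt 3 := Real.sqrt_pos.mpr (by norm_num)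
  have hCu : (0:ℝ) < Real.cosh u := Real.cosh_pos u
  have hCv : (0:ℝ) < Real.cosh v := Real.cosh_pos v
  have hu2 := Real.cosh_sq_sub_sinh_sq u
  have hv2 := Real.cosh_sq_sub_sinh_sq v
  rw [linearIndependent_fin2]
  constructor
  · intro h
    have h2 := congrFun h 2
    simp only [Matrix.cons_val_one, Matrix.head_cons, Pi.zero_apply, Matrix.cons_val_zero] at h2
    rw [d_v2] at h2
    nlinarith [mul_pos hr hCu, sq_nonneg (Real.sinh v), mul_pos hCv hCv]
  · intro a h
    have h1 := congrFun h 1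
    have h2 := congrFun h 2
    simp only [Matrix.cons_val_zero, Matrix.cons_val_one, Matrix.head_cons,
      Pi.smul_apply, smul_eq_mul] at h1 h2
    rw [d_v1, d_u1] at h1
    rw [d_v2, d_u2] at h2
    have hr' : Real.sqrt 3 ≠ 0 := ne_of_gt hr
    -- divide out √3
    have e1 : a * (Real.sinh u * Real.cosh u * (2 * Real.sinh v * Real.cosh v))
        = (Real.cosh u ^ 2 + Real.sinh u ^ 2) * Real.cosh v ^ 2 := by
      apply mul_left_cancel₀ hr'; nlinarith [h1]
    have e2 : a * (Real.cosh u * (Real.cosh v ^ 2 + Real.sinh v ^ 2))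
        = Real.sinh u * Real.sinh v * Real.cosh v := by
      apply mul_left_cancel₀ hr'; nlinarith [h2]
    have key : (Real.cosh u ^ 2 + Real.sinh u ^ 2) * Real.cosh v ^ 2 * (Real.cosh v ^ 2 + Real.sinh v ^ 2)
        = 2 * Real.sinh u ^ 2 * Real.sinh v ^ 2 * Real.cosh v ^ 2 := by
      linear_combination (2 * Real.sinh u * Real.sinh v * Real.cosh v) * e2
        - (Real.cosh v ^ 2 + Real.sinh v ^ 2) * e1
    nlinarith [key, sq_nonneg (Real.sinh u * Real.cosh v), sq_nonneg (Real.sinh v * Real.cosh v),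
      mul_pos (mul_pos hCu hCv) (mul_pos hCu hCv), mul_pos hCv hCv, sq_nonneg (Real.sinh v)]
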